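/- Let r and h be positive integers with r < φ^h, and let s, t be integers with 0 ≤ s ≤ r−1 and 0 ≤ t ≤ r−1. Then there exist nonnegative integers u and v such that u = G(v), u ≡ s (mod r), v ≡ t (mod r), and v ≤ F_{2h+2} − 2. -/

import Mathlib

noncomputable def goldenphi : ℝ := (1 + Real.sqrt 5) / 2

noncomputable def hofG (x : ℕ) : ℕ := (⌊((x : ℝ) + 1) / goldenphi⌋).toNat

noncomputable def gq : ℝ := goldenphi⁻¹

lemma goldenphi_eq : goldenphi = Real.goldenRatio := rfl
lemma gp_pos : 0 < goldenphi := by rw [goldenphi_eq]; exact Real.goldenRatio_pos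
lemma one_lt_gp : 1 < goldenphi := by rw [goldenphi_eq]; exact Real.one_lt_goldenRatio
lemma gp_sq : goldenphi ^ 2 = goldenphi + 1 := by rw [goldenphi_eq]; exact Real.goldenRatio_sq
lemma gp_ne : goldenphi ≠ 0 := ne_of_gt gp_pos
lemma gq_pos : 0 < gq := inv_pos.mpr gp_pos
lemma gp_mul_gq : goldenphi * gq = 1 := mul_inv_cancel₀ gp_ne

lemma gp_lt_two : goldenphi < 2 := by
  have h5 : Real.sqrt 5 < 3 := by
    nlinarith [Real.sq_sqrt (by norm_num : (5:ℝ) ≥ 0), Real.sqrt_nonneg 5]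
  rw [goldenphi]; linarith

lemma one_add_gq : 1 + gq = goldenphi := by
  have h2 := gp_sq
  have h1 := gp_mul_gq
  have := gp_ne
  field_simp [gq]
  nlinarith [gp_pos]

lemma gq_lt_one : gq < 1 := by linarith [one_add_gq, gp_lt_two]

lemma one_sub_gq : gq ^ 2 = 1 - gq := by
  linear_combination gq * one_add_gq + gp_mul_gq

lemma gq_step (a : ℕ) : gq ^ a - gq ^ (a+1) = gq ^ (a+2) := by
  linear_combination (-(gq ^ a)) * one_sub_gq

lemma fibq : ∀ j : ℕ, (Nat.fib (j+1) : ℝ) * gq = Nat.fib j + (-1)^j * gq^(j+1) := by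
  intro j
  induction j using Nat.twoStepInduction with
  | zero => simp [Nat.fib]
  | one => norm_num [Nat.fib]; linear_combination one_sub_gq
  | more j ih1 ih2 =>
    have hf : Nat.fib (j+2+1) = Nat.fib (j+1) + Nat.fib (j+2) := by
      have := Nat.fib_add_two (n := j+1)
      rwa [show j+1+2 = j+2+1 by omega] at this
    rw [hf]
    push_cast
    rw [show j+1+1 = j+2 by omega] at ih2
    have hf2 : (Nat.fib (j+2):ℝ) = Nat.fib j + Nat.fib (j+1) := by
      exact_mod_cast congrArg (Nat.cast (R := ℝ)) (Nat.fib_add_two (n := j))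
    linear_combination ih1 + ih2 + ((-1:ℝ)^j) * gq_step (j+1) - hf2

lemma fibq' (i : ℕ) : (Nat.fib (i+2) : ℝ) * gq = Nat.fib (i+1) + (-1)^(i+1) * gq^(i+2) := by
  have := fibq (i+1)
  rwa [show i+1+1 = i+2 by omega] at this

noncomputable def mxE (i : ℕ) : ℝ := if Odd i then gq^(i+1) else gq^(i+2)
noncomputable def mnE (i : ℕ) : ℝ := if Odd i then -gq^(i+2) else -gq^(i+1)

lemma mxE_odd {i} (h : Odd i) : mxE i = gq^(i+1) := if_pos h
lemma mxE_even {i} (h : ¬ Odd i) : mxE i = gq^(i+2) := if_neg h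
lemma mnE_odd {i} (h : Odd i) : mnE i = -gq^(i+2) := if_pos h
lemma mnE_even {i} (h : ¬ Odd i) : mnE i = -gq^(i+1) := if_neg h

lemma odd2 (i : ℕ) : Odd (i+2) ↔ Odd i := by simp [Nat.odd_add]

lemma core : ∀ (n : ℕ) (i : ℕ) (y : ℝ), mnE i ≤ y → y ≤ mxE i →
    ∃ k m : ℕ, k + Nat.fib (i+1) ≤ Nat.fib (i+2+n) ∧
      ∃ y' : ℝ, mnE (i+n) ≤ y' ∧ y' ≤ mxE (i+n) ∧ (k:ℝ) * gq = (m:ℝ) + y - y' := by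
  intro n
  induction n using Nat.strong_induction_on with
  | _ n ih =>
    intro i y h1 h2
    rcases n with _ | n'
    · refine ⟨0, 0, ?_, y, ?_, ?_, by simp⟩
      · simpa using Nat.fib_mono (show i+1 ≤ i+2 by omega)
      · simpa using h1
      · simpa using h2
    · have pp : ∀ a : ℕ, (0:ℝ) < gq ^ a := fun a => pow_pos gq_pos a
      rcases Nat.even_or_odd i with hev | hod
      -- EVEN case
      · have hne : ¬ Odd i := Nat.not_odd_iff_even.mpr hev
        have hoi1 : Odd (i+1) := Even.add_one hev
        have hne2 : ¬ Odd (i+2) := by rw [odd2]; exact hne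
        rw [mnE_even hne] at h1
        rw [mxE_even hne] at h2
        by_cases hc : mnE (i+1) ≤ y
        · -- skip index i
          have h2' : y ≤ mxE (i+1) := by
            rw [mxE_odd hoi1, show i+1+1 = i+2 by omega]; exact h2
          obtain ⟨k, m, hk, y', ha, hb, heq⟩ := ih n' (by omega) (i+1) y hc h2'
          rw [show i+1+2+n' = i+2+(n'+1) by omega, show i+1+1 = i+2 by omega] at hk
          rw [show i+1+n' = i+(n'+1) by omega] at ha hb
          have hmono := Nat.fib_mono (show i+1 ≤ i+2 by omega)
          exact ⟨k, m, by omega, y', ha, hb, heq⟩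
        · -- take index i+2 term with negative sign
          push_neg at hc
          rw [mnE_odd hoi1, show i+1+2 = i+3 by omega] at hc
          have hfib : (Nat.fib (i+2):ℝ) * gq = Nat.fib (i+1) - gq^(i+2) := by
            have h := fibq' i
            rw [Odd.neg_one_pow hoi1] at h
            linarith [h]
          have hf3 : Nat.fib (i+3) = Nat.fib (i+1) + Nat.fib (i+2) := by
            have := Nat.fib_add_two (n := i+1)
            rwa [show i+1+2 = i+3 by omega] at this
          have hb1 : -gq^(i+3) ≤ y + gq^(i+2) := by
            have := gq_step (i+1); linarith
          have hb2 : y + gq^(i+2) < gq^(i+4) := by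
            have := gq_step (i+2)
            rw [show i+2+1 = i+3 by omega, show i+2+2 = i+4 by omega] at this
            linarith
          rcases n' with _ | n''
          · refine ⟨Nat.fib (i+2), Nat.fib (i+1), ?_, y + gq^(i+2), ?_, ?_, ?_⟩
            · rw [show i+2+(0+1) = i+3 by omega]; omega
            · rw [show i+(0+1) = i+1 by omega, mnE_odd hoi1,
                show i+1+2 = i+3 by omega]
              exact hb1
            · rw [show i+(0+1) = i+1 by omega, mxE_odd hoi1,
                show i+1+1 = i+2 by omega]
              have h24 : gq^(i+4) ≤ gq^(i+2) := by
                have := gq_step (i+2)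
                rw [show i+2+1 = i+3 by omega, show i+2+2 = i+4 by omega] at this
                linarith [pp (i+3)]
              linarith
            · linarith [hfib]
          · obtain ⟨k', m', hk', y', ha, hb, heq⟩ :=
              ih n'' (by omega) (i+2) (y + gq^(i+2))
                (by rw [mnE_even hne2, show i+2+1 = i+3 by omega]; exact hb1)
                (by rw [mxE_even hne2, show i+2+2 = i+4 by omega]; linarith [hb2])
            rw [show i+2+2+n'' = i+2+(n''+1+1) by omega, show i+2+1 = i+3 by omega] at hk'
            rw [show i+2+n'' = i+(n''+1+1) by omega] at ha hb
            refine ⟨Nat.fib (i+2) + k', Nat.fib (i+1) + m', by omega, y', ha, hb, ?_⟩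
            push_cast
            linear_combination hfib + heq
      -- ODD case
      · have hne1 : ¬ Odd (i+1) := Nat.not_odd_iff_even.mpr (Odd.add_one hod)
        have hod2 : Odd (i+2) := by rw [odd2]; exact hod
        rw [mnE_odd hod] at h1
        rw [mxE_odd hod] at h2
        by_cases hc : y ≤ mxE (i+1)
        · have h1' : mnE (i+1) ≤ y := by
            rw [mnE_even hne1, show i+1+1 = i+2 by omega]; exact h1
          obtain ⟨k, m, hk, y', ha, hb, heq⟩ := ih n' (by omega) (i+1) y h1' hc
          rw [show i+1+2+n' = i+2+(n'+1) by omega, show i+1+1 = i+2 by omega] at hk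
          rw [show i+1+n' = i+(n'+1) by omega] at ha hb
          have hmono := Nat.fib_mono (show i+1 ≤ i+2 by omega)
          exact ⟨k, m, by omega, y', ha, hb, heq⟩
        · push_neg at hc
          rw [mxE_even hne1, show i+1+2 = i+3 by omega] at hc
          have hfib : (Nat.fib (i+2):ℝ) * gq = Nat.fib (i+1) + gq^(i+2) := by
            have h := fibq' i
            have : Even (i+1) := Odd.add_one hod
            rw [Even.neg_one_pow this] at h
            linarith [h]
          have hf3 : Nat.fib (i+3) = Nat.fib (i+1) + Nat.fib (i+2) := by
            have := Nat.fib_add_two (n := i+1)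
            rwa [show i+1+2 = i+3 by omega] at this
          have hb1 : y - gq^(i+2) ≤ gq^(i+3) := by
            have := gq_step (i+1); linarith
          have hb2 : -gq^(i+4) < y - gq^(i+2) := by
            have := gq_step (i+2)
            rw [show i+2+1 = i+3 by omega, show i+2+2 = i+4 by omega] at this
            linarith
          rcases n' with _ | n''
          · refine ⟨Nat.fib (i+2), Nat.fib (i+1), ?_, y - gq^(i+2), ?_, ?_, ?_⟩
            · rw [show i+2+(0+1) = i+3 by omega]; omega
            · rw [show i+(0+1) = i+1 by omega, mnE_even hne1,
                show i+1+1 = i+2 by omega]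
              linarith [pp (i+3)]
            · rw [show i+(0+1) = i+1 by omega, mxE_even hne1,
                show i+1+2 = i+3 by omega]
              exact hb1
            · linarith [hfib]
          · obtain ⟨k', m', hk', y', ha, hb, heq⟩ :=
              ih n'' (by omega) (i+2) (y - gq^(i+2))
                (by rw [mnE_odd hod2, show i+2+2 = i+4 by omega]; linarith [hb2])
                (by rw [mxE_odd hod2, show i+2+1 = i+3 by omega]; exact hb1)
            rw [show i+2+2+n'' = i+2+(n''+1+1) by omega, show i+2+1 = i+3 by omega] at hk'
            rw [show i+2+n'' = i+(n''+1+1) by omega] at ha hb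
            refine ⟨Nat.fib (i+2) + k', Nat.fib (i+1) + m', by omega, y', ha, hb, ?_⟩
            push_cast
            linear_combination hfib + heq

lemma width (i : ℕ) : mxE i - mnE i = gq ^ i := by
  rcases Nat.even_or_odd i with he | ho
  · rw [mxE_even (Nat.not_odd_iff_even.mpr he), mnE_even (Nat.not_odd_iff_even.mpr he)]
    have := gq_step i; linarith
  · rw [mxE_odd ho, mnE_odd ho]; have := gq_step i; linarith

lemma cat (i : ℕ) : (Nat.fib (2*i) * Nat.fib (2*i+3) + 1 = Nat.fib (2*i+1) * Nat.fib (2*i+2)) ∧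
    (Nat.fib (2*i+1) * Nat.fib (2*i+4) = Nat.fib (2*i+2) * Nat.fib (2*i+3) + 1) := by
  induction i with
  | zero => decide
  | succ i ih =>
    obtain ⟨A, B⟩ := ih
    have e3 : Nat.fib (2*i+3) = Nat.fib (2*i+1) + Nat.fib (2*i+2) := by
      have := Nat.fib_add_two (n := 2*i+1); rwa [show 2*i+1+2 = 2*i+3 by omega] at this
    have e4 : Nat.fib (2*i+4) = Nat.fib (2*i+2) + Nat.fib (2*i+3) := by
      have := Nat.fib_add_two (n := 2*i+2); rwa [show 2*i+2+2 = 2*i+4 by omega] at this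
    have e5 : Nat.fib (2*i+5) = Nat.fib (2*i+3) + Nat.fib (2*i+4) := by
      have := Nat.fib_add_two (n := 2*i+3); rwa [show 2*i+3+2 = 2*i+5 by omega] at this
    have e6 : Nat.fib (2*i+6) = Nat.fib (2*i+4) + Nat.fib (2*i+5) := by
      have := Nat.fib_add_two (n := 2*i+4); rwa [show 2*i+4+2 = 2*i+6 by omega] at this
    have hA : Nat.fib (2*i+2) * Nat.fib (2*i+5) + 1 = Nat.fib (2*i+3) * Nat.fib (2*i+4) := by
      zify at B e5 e3 ⊢
      linear_combination (Nat.fib (2*i+2):ℤ) * e5 - (Nat.fib (2*i+4):ℤ) * e3 - B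
    have hB : Nat.fib (2*i+3) * Nat.fib (2*i+6) = Nat.fib (2*i+4) * Nat.fib (2*i+5) + 1 := by
      zify at hA e6 e4 ⊢
      linear_combination (Nat.fib (2*i+3):ℤ) * e6 - (Nat.fib (2*i+5):ℤ) * e4 - hA
    constructor
    · rw [show 2*(i+1) = 2*i+2 by omega, show 2*i+2+3 = 2*i+5 by omega,
          show 2*i+2+1 = 2*i+3 by omega, show 2*i+2+2 = 2*i+4 by omega]
      exact hA
    · rw [show 2*(i+1)+1 = 2*i+3 by omega, show 2*(i+1)+4 = 2*i+6 by omega,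
          show 2*(i+1)+2 = 2*i+4 by omega, show 2*(i+1)+3 = 2*i+5 by omega]
      exact hB

lemma gold_pow : ∀ n : ℕ, goldenphi^(n+1) = Nat.fib (n+1) * goldenphi + Nat.fib n := by
  intro n
  induction n with
  | zero => simp [Nat.fib]
  | succ n ih =>
    have hf : (Nat.fib (n+2):ℝ) = Nat.fib n + Nat.fib (n+1) := by
      exact_mod_cast congrArg (Nat.cast (R:=ℝ)) (Nat.fib_add_two (n:=n))
    calc goldenphi^(n+2) = goldenphi^(n+1) * goldenphi := by ring
    _ = ((Nat.fib (n+1):ℝ) * goldenphi + Nat.fib n) * goldenphi := by rw [ih]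
    _ = (Nat.fib (n+1):ℝ) * (goldenphi^2) + Nat.fib n * goldenphi := by ring
    _ = (Nat.fib (n+2):ℝ) * goldenphi + Nat.fib (n+1) := by rw [gp_sq, hf]; ring

lemma fib_gp (n : ℕ) : (Nat.fib (n+1):ℝ) * goldenphi = Nat.fib (n+2) - (-1)^(n+1) * gq^(n+1) := by
  have h := fibq' n
  linear_combination (-(goldenphi)) * h + ((Nat.fib (n+2):ℝ) - (-1)^(n+1) * gq^(n+1)) * gp_mul_gq

lemma budget (r h : ℕ) (hh : 0 < h) (hrh : (r:ℝ) < goldenphi ^ h) :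
    r * Nat.fib (h+2) + 1 ≤ Nat.fib (2*h+2) := by
  obtain ⟨h', rfl⟩ : ∃ h', h = h'+1 := ⟨h-1, by omega⟩
  have hgp := gold_pow h'
  have hfib := fib_gp h'
  have he1 : Nat.fib (2*(h'+1)+2) = Nat.fib (h'+1) * Nat.fib (h'+2) + Nat.fib (h'+2) * Nat.fib (h'+3) := by
    have := Nat.fib_add (h'+1) (h'+2)
    rwa [show h'+1+(h'+2)+1 = 2*(h'+1)+2 by omega, show h'+1+1 = h'+2 by omega,
         show h'+2+1 = h'+3 by omega] at this
  rw [show h'+1+2 = h'+3 by omega]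
  rcases Nat.even_or_odd h' with hev | hod
  · -- h = h'+1 odd
    obtain ⟨i, rfl⟩ : ∃ i, h' = 2*i := by rcases hev with ⟨j, hj⟩; exact ⟨j, by omega⟩
    have hq1 : gq ^ (2*i+1) < 1 := pow_lt_one₀ (le_of_lt gq_pos) gq_lt_one (by omega)
    have hsign : ((-1:ℝ))^(2*i+1) = -1 := Odd.neg_one_pow ⟨i, by omega⟩
    rw [hsign] at hfib
    -- hfib : fib (2i+1) * gp = fib (2i+2) - (-1) * gq^(2i+1) = fib(2i+2) + gq^(2i+1)
    have hreal : (r:ℝ) < (Nat.fib (2*i+2):ℝ) + (Nat.fib (2*i):ℝ) + 1 := by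
      rw [hgp] at hrh; linarith [hrh, hfib, hq1]
    have hrL : r ≤ Nat.fib (2*i+2) + Nat.fib (2*i) := by
      have : r < Nat.fib (2*i+2) + Nat.fib (2*i) + 1 := by exact_mod_cast hreal
      omega
    have hcat := (cat i).1
    have hmul : r * Nat.fib (2*i+3) ≤ (Nat.fib (2*i+2) + Nat.fib (2*i)) * Nat.fib (2*i+3) :=
      Nat.mul_le_mul_right _ hrL
    have hd : (Nat.fib (2*i+2) + Nat.fib (2*i)) * Nat.fib (2*i+3)
        = Nat.fib (2*i+2) * Nat.fib (2*i+3) + Nat.fib (2*i) * Nat.fib (2*i+3) := Nat.add_mul _ _ _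
    zify at hcat he1 hmul hd ⊢
    linarith
  · -- h = h'+1 even
    obtain ⟨i, rfl⟩ : ∃ i, h' = 2*i+1 := hod
    rw [show 2*i+1+1 = 2*i+2 by omega] at hgp hfib hrh
    rw [show 2*i+1+2 = 2*i+3 by omega] at hfib
    rw [show 2*i+1+3 = 2*i+4 by omega] at he1 ⊢
    rw [show 2*i+1+2 = 2*i+3 by omega] at he1
    have hq0 : (0:ℝ) < gq ^ (2*i+2) := pow_pos gq_pos _
    have hsign : ((-1:ℝ))^(2*i+2) = 1 := Even.neg_one_pow ⟨i+1, by omega⟩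
    rw [hsign] at hfib
    have hreal : (r:ℝ) < (Nat.fib (2*i+3):ℝ) + (Nat.fib (2*i+1):ℝ) := by
      rw [hgp] at hrh; linarith [hrh, hfib, hq0]
    have hrL : r + 1 ≤ Nat.fib (2*i+3) + Nat.fib (2*i+1) := by
      have : r < Nat.fib (2*i+3) + Nat.fib (2*i+1) := by exact_mod_cast hreal
      omega
    have hcat := (cat i).2
    have hmul : (r+1) * Nat.fib (2*i+4) ≤ (Nat.fib (2*i+3) + Nat.fib (2*i+1)) * Nat.fib (2*i+4) :=
      Nat.mul_le_mul_right _ hrL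
    have hd : (Nat.fib (2*i+3) + Nat.fib (2*i+1)) * Nat.fib (2*i+4)
        = Nat.fib (2*i+3) * Nat.fib (2*i+4) + Nat.fib (2*i+1) * Nat.fib (2*i+4) := Nat.add_mul _ _ _
    have hd2 : (r+1) * Nat.fib (2*i+4) = r * Nat.fib (2*i+4) + Nat.fib (2*i+4) := by ring
    have hF2 : 2 ≤ Nat.fib (2*i+4) := by
      have h3 : Nat.fib 3 ≤ Nat.fib (2*i+4) := Nat.fib_mono (by omega)
      exact le_trans (by decide : 2 ≤ Nat.fib 3) h3
    zify at hcat he1 hmul hd hd2 hF2 ⊢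
    linarith

theorem stmt_7 (r h s t : ℕ) (hr : 0 < r) (hh : 0 < h)
    (hrh : (r : ℝ) < goldenphi ^ h) (hs : s ≤ r - 1) (ht : t ≤ r - 1) :
    ∃ u v : ℕ, u = hofG v ∧ u ≡ s [MOD r] ∧ v ≡ t [MOD r] ∧
      v ≤ Nat.fib (2 * h + 2) - 2 := by
  have hrR : (0:ℝ) < (r:ℝ) := by exact_mod_cast hr
  have hrne : (r:ℝ) ≠ 0 := ne_of_gt hrR
  set w : ℝ := ((t:ℝ)+1) * gq with hw
  set zz : ℝ := ((s:ℝ) - w)/r + mxE h with hzz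
  set J0 : ℤ := -⌊zz + gq⌋ with hJ0
  have hfl1 := Int.floor_le (zz + gq)
  have hfl2 := Int.lt_floor_add_one (zz + gq)
  have hy1 : mnE 0 ≤ zz + (J0:ℝ) := by
    rw [mnE_even (by decide : ¬ Odd 0)]
    push_cast [hJ0]
    norm_num
    linarith
  have hy2 : zz + (J0:ℝ) ≤ mxE 0 := by
    rw [mxE_even (by decide : ¬ Odd 0)]
    push_cast [hJ0]
    norm_num
    linarith [one_sub_gq]
  obtain ⟨k, m, hk, y', ha, hb, heq⟩ := core h 0 (zz + (J0:ℝ)) hy1 hy2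
  rw [show (0:ℕ)+2+h = h+2 by omega] at hk
  have hk1 : k + 1 ≤ Nat.fib (h+2) := by
    have : Nat.fib (0+1) = 1 := by norm_num
    omega
  rw [show (0:ℕ)+h = h by omega] at ha hb
  set v : ℕ := t + k * r with hv
  set U : ℤ := (s:ℤ) + ((m:ℤ) + J0) * (r:ℤ) with hU
  -- key identity
  have hrzz : (r:ℝ) * zz = ((s:ℝ) - w) + (r:ℝ) * mxE h := by
    rw [hzz]; field_simp
  have hvr : ((v:ℝ)) = (t:ℝ) + (k:ℝ)*(r:ℝ) := by rw [hv]; push_cast; ring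
  have key : ((v:ℝ)+1) * gq = (U:ℝ) + (r:ℝ) * (mxE h - y') := by
    have e1 : ((v:ℝ)+1)*gq = ((t:ℝ)+1)*gq + ((k:ℝ)*gq)*(r:ℝ) := by rw [hvr]; ring
    rw [e1, heq, ← hw]
    have : ((m:ℝ) + (zz + (J0:ℝ)) - y')*(r:ℝ)
        = (m:ℝ)*(r:ℝ) + ((r:ℝ)*zz) + (J0:ℝ)*(r:ℝ) - y'*(r:ℝ) := by ring
    rw [this, hrzz, hU]
    push_cast
    ring
  have hdiv : ((v:ℝ)+1)/goldenphi = ((v:ℝ)+1) * gq := by rw [gq]; ring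
  have hwid := width h
  have hub : (r:ℝ) * (mxE h - y') < 1 := by
    have h1 : mxE h - y' ≤ gq ^ h := by linarith [hwid, ha]
    have h2 : (r:ℝ) * (mxE h - y') ≤ (r:ℝ) * gq ^ h :=
      mul_le_mul_of_nonneg_left h1 (le_of_lt hrR)
    have h3 : (r:ℝ) * gq ^ h < goldenphi ^ h * gq ^ h :=
      mul_lt_mul_of_pos_right hrh (pow_pos gq_pos h)
    have h4 : goldenphi ^ h * gq ^ h = 1 := by
      rw [← mul_pow, gp_mul_gq, one_pow]
    linarith
  have hlb : (0:ℝ) ≤ (r:ℝ) * (mxE h - y') :=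
    mul_nonneg (le_of_lt hrR) (by linarith [hb])
  have hfl : ⌊((v:ℝ)+1)/goldenphi⌋ = U := by
    rw [Int.floor_eq_iff, hdiv, key]
    constructor
    · linarith
    · push_cast; linarith
  have hU0 : 0 ≤ U := by
    have hpos : (0:ℝ) ≤ ((v:ℝ)+1)/goldenphi := div_nonneg (by positivity) (le_of_lt gp_pos)
    have : ((U:ℤ):ℝ) > -1 := by
      rw [hdiv, key] at hpos; linarith
    have : (-1:ℤ) < U := by exact_mod_cast this
    omega
  refine ⟨U.toNat, v, ?_, ?_, ?_, ?_⟩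
  · rw [hofG, hfl]
  · rw [Nat.modEq_iff_dvd]
    refine ⟨-((m:ℤ) + J0), ?_⟩
    rw [Int.toNat_of_nonneg hU0, hU]
    ring
  · rw [Nat.modEq_iff_dvd]
    refine ⟨-(k:ℤ), ?_⟩
    push_cast [hv]
    ring
  · have hbud := budget r h hh hrh
    have ht1 : t + 1 ≤ r := by omega
    have hmul : (k+1) * r ≤ Nat.fib (h+2) * r := Nat.mul_le_mul_right _ hk1
    have hmul2 : Nat.fib (h+2) * r = r * Nat.fib (h+2) := Nat.mul_comm _ _
    have hd : (k+1)*r = k*r + r := by ring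
    omega
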